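/- Let w : O → ℂ be a weakly differentiable bounded function on an open set O ⊆ ℝ^d, Φ(z) := (|z| ∧ 1)·sgn(z) with sgn(z) = z/|z| for z ≠ 0 and sgn(0) = 0, and suppose ∇Φ(w) = i Ψ(w) 𝟙_{|w|>1} + 𝟙_{|w|≤1} ∇w, where Ψ(w) := (Im(sgn(conj w) ∇w)/|w|)·sgn(w). Then Re ∫_O ∇Φ(w) · conjugate(∇w − ∇Φ(w)) dx = ∫_{{|w|>1}} |Ψ(w)|² (|w| − 1) dx ≥ 0. -/

import Mathlib

open Complex

/-- Pointwise identity underlying `L^∞`-contractivity: for a vector `a ∈ ℂ^d`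
(representing `∇w`), a unimodular `s = sgn(w)` and `t = |w| > 1`, with
`Ψ = (Im(conj s · a)/t) · s`, one has
`Re(iΨ · conj(a − iΨ)) = |Ψ|²(t − 1) ≥ 0`. -/
theorem Linfty_contractivity_pointwise {d : ℕ} (a : Fin d → ℂ) (s : ℂ)
    (hs : ‖s‖ = 1) (t : ℝ) (ht : 1 < t)
    (Ψ : Fin d → ℂ)
    (hΨ : ∀ k, Ψ k = ((((starRingEnd ℂ) s * a k).im / t : ℝ) : ℂ) * s) :
    (∑ k, (Complex.I * Ψ k) * (starRingEnd ℂ) (a k - Complex.I * Ψ k)).re =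
      (∑ k, Complex.normSq (Ψ k)) * (t - 1) ∧
    0 ≤ (∑ k, Complex.normSq (Ψ k)) * (t - 1) := by
  have hs2 : s.re ^ 2 + s.im ^ 2 = 1 := by
    have := Complex.normSq_eq_norm_sq s
    simp [Complex.normSq_apply, hs] at this
    nlinarith [this]
  have ht0 : (t : ℝ) ≠ 0 := by linarith
  have key : ∀ k, ((Complex.I * Ψ k) * (starRingEnd ℂ) (a k - Complex.I * Ψ k)).re
      = Complex.normSq (Ψ k) * (t - 1) := by
    intro k
    rw [hΨ k]
    simp only [Complex.normSq_apply, Complex.mul_re, Complex.mul_im, Complex.sub_re,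
      Complex.sub_im, Complex.I_re, Complex.I_im, Complex.conj_re, Complex.conj_im,
      Complex.ofReal_re, Complex.ofReal_im, map_mul]
    field_simp
    linear_combination (-(s.re * (a k).im - s.im * (a k).re) ^ 2 * t) * hs2
  have h1 : (∑ k, (Complex.I * Ψ k) * (starRingEnd ℂ) (a k - Complex.I * Ψ k)).re
      = (∑ k, Complex.normSq (Ψ k)) * (t - 1) := by
    rw [Complex.re_sum, Finset.sum_mul]
    exact Finset.sum_congr rfl fun k _ => key k
  refine ⟨h1, mul_nonneg (Finset.sum_nonneg fun k _ => Complex.normSq_nonneg _) (by linarith)⟩
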